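/- arXiv:1810.00583 — 2 statements merged into one kernel-verified Lean document; each statement's English description precedes it below -/
import Mathlib

section
/- Let m : ℝ≥0 → ℝ≥0 be continuous with m(t) > 0 for t > 0, and suppose t ↦ m(t)/t is non-increasing on (0,∞). Define M(t) = ∫₀ᵗ m(s) ds. Then for every θ ≥ 2n (with n ≥ 1) the function t ↦ (1/n) M(t) − (1/θ) m(t) t is non-negative and non-decreasing on [0,∞). -/
theorem stmt0 (n : ℕ) (hn : 1 ≤ n) (m : ℝ → ℝ) (hmc : Continuous m)
    (hm0 : ∀ t ≥ (0:ℝ), 0 ≤ m t) (hmpos : ∀ t > (0:ℝ), 0 < m t)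
    (hmdec : ∀ s t : ℝ, 0 < s → s ≤ t → m t / t ≤ m s / s)
    (θ : ℝ) (hθ : (2 * n : ℝ) ≤ θ)
    (M : ℝ → ℝ) (hM : ∀ t, M t = ∫ s in (0:ℝ)..t, m s) :
    (∀ t ≥ (0:ℝ), 0 ≤ (1 / n) * M t - (1 / θ) * m t * t) ∧
      (∀ s t : ℝ, 0 ≤ s → s ≤ t →
        (1 / n) * M s - (1 / θ) * m s * s ≤ (1 / n) * M t - (1 / θ) * m t * t) := by
  have hn0 : (0:ℝ) < n := by exact_mod_cast hn.trans_lt' (by norm_num)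
  have h2n : (0:ℝ) < 2 * n := by linarith
  have hθ0 : (0:ℝ) < θ := lt_of_lt_of_le h2n hθ
  -- key integral lemma
  have key : ∀ s t : ℝ, 0 ≤ s → s ≤ t → 0 < t →
      m t / t * ((t ^ 2 - s ^ 2) / 2) ≤ ∫ u in s..t, m u := by
    intro s t hs hst ht
    have hint : ∀ a b : ℝ, IntervalIntegrable m MeasureTheory.volume a b :=
      fun a b => hmc.intervalIntegrable a b
    have h1 : (∫ u in s..t, m t / t * u) ≤ ∫ u in s..t, m u := by
      apply intervalIntegral.integral_mono_on hst
      · exact Continuous.intervalIntegrable (by continuity) s t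
      · exact hint s t
      · intro u hu
        rcases eq_or_lt_of_le (hs.trans hu.1) with h0 | h0
        · rw [← h0]
          simpa using hm0 0 le_rfl
        · have := hmdec u t h0 hu.2
          calc m t / t * u ≤ m u / u * u := by
                exact mul_le_mul_of_nonneg_right this (le_of_lt h0)
            _ = m u := by field_simp
    have h2 : (∫ u in s..t, m t / t * u) = m t / t * ((t ^ 2 - s ^ 2) / 2) := by
      rw [intervalIntegral.integral_const_mul, integral_id]
    linarith
  have hMdiff : ∀ s t : ℝ, M t - M s = ∫ u in s..t, m u := by
    intro s t
    rw [hM t, hM s]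
    have i1 : IntervalIntegrable m MeasureTheory.volume 0 s := hmc.intervalIntegrable 0 s
    have i2 : IntervalIntegrable m MeasureTheory.volume s t := hmc.intervalIntegrable s t
    have := intervalIntegral.integral_add_adjacent_intervals i1 i2
    linarith
  have hM0 : M 0 = 0 := by rw [hM]; simp
  have main : ∀ s t : ℝ, 0 ≤ s → s ≤ t →
      (1 / n) * M s - (1 / θ) * m s * s ≤ (1 / n) * M t - (1 / θ) * m t * t := by
    intro s t hs hst
    rcases eq_or_lt_of_le hst with rfl | hlt
    · exact le_rfl
    have ht : 0 < t := lt_of_le_of_lt hs hlt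
    set c := m t / t with hc
    have hc0 : 0 ≤ c := div_nonneg (hm0 t ht.le) ht.le
    have hA := key s t hs hst ht
    set A := ∫ u in s..t, m u with hAdef
    have hMt : M t = M s + A := by have := hMdiff s t; linarith
    have hct : c * t ^ 2 = m t * t := by field_simp [hc]; rw [hc]; exact div_mul_cancel₀ _ ht.ne'
    have h1 : m t * t - m s * s ≤ c * (t ^ 2 - s ^ 2) := by
      rcases eq_or_lt_of_le hs with h0 | h0
      · rw [← h0]; simp; nlinarith [hct]
      · have hdec := hmdec s t h0 hst
        have : c * s ^ 2 ≤ m s * s := by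
          have : c * s ≤ m s / s * s := mul_le_mul_of_nonneg_right hdec h0.le
          have h2 : m s / s * s = m s := by field_simp
          nlinarith
        nlinarith
    have hts : 0 ≤ t ^ 2 - s ^ 2 := by nlinarith
    have h2 : (1 / θ) * (m t * t - m s * s) ≤ (1 / θ) * (c * (t ^ 2 - s ^ 2)) :=
      mul_le_mul_of_nonneg_left h1 (by positivity)
    have h3 : (1 / θ) * (c * (t ^ 2 - s ^ 2)) ≤ (1 / (2 * n)) * (c * (t ^ 2 - s ^ 2)) := by
      apply mul_le_mul_of_nonneg_right _ (by positivity)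
      exact one_div_le_one_div_of_le h2n hθ
    have h4 : (1 / (2 * (n:ℝ))) * (c * (t ^ 2 - s ^ 2)) = (1 / n) * (c * ((t ^ 2 - s ^ 2) / 2)) := by
      ring
    have h5 : (1 / (n:ℝ)) * (c * ((t ^ 2 - s ^ 2) / 2)) ≤ (1 / n) * A :=
      mul_le_mul_of_nonneg_left hA (by positivity)
    have := h2.trans (h3.trans (h4.le.trans h5))
    rw [hMt]
    ring_nf at this ⊢
    linarith
  constructor
  · intro t ht
    have := main 0 t le_rfl ht
    simp [hM0] at this
    ring_nf at this ⊢
    linarith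
  · exact main
end

section
/- For every pair of vectors a₁, a₂ ∈ ℝⁿ and every integer n ≥ 2, one has |a₁ − a₂|ⁿ ≤ 2^{n−2} (|a₁|^{n−2} a₁ − |a₂|^{n−2} a₂) · (a₁ − a₂), where · denotes the Euclidean inner product and |·| the Euclidean norm. -/
theorem stmt4 (n : ℕ) (hn : 2 ≤ n) (a₁ a₂ : EuclideanSpace ℝ (Fin n)) :
    ‖a₁ - a₂‖ ^ n ≤ 2 ^ (n - 2) *
      (inner ℝ ((‖a₁‖ ^ (n - 2)) • a₁ - (‖a₂‖ ^ (n - 2)) • a₂) (a₁ - a₂) : ℝ) := by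
  obtain ⟨m, rfl⟩ : ∃ m, n = m + 2 := ⟨n - 2, by omega⟩
  simp only [Nat.add_sub_cancel]
  set x := ‖a₁‖ with hxdef
  set y := ‖a₂‖ with hydef
  set t : ℝ := inner ℝ a₁ a₂ with htdef
  have hx : 0 ≤ x := norm_nonneg _
  have hy : 0 ≤ y := norm_nonneg _
  have hinner : (inner ℝ ((x ^ m) • a₁ - (y ^ m) • a₂) (a₁ - a₂) : ℝ) =
      x ^ m * x ^ 2 - (x ^ m + y ^ m) * t + y ^ m * y ^ 2 := by
    simp only [inner_sub_left, inner_sub_right, real_inner_smul_left,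
      real_inner_self_eq_norm_sq, ← hxdef, ← hydef]
    have hcomm : (inner ℝ a₂ a₁ : ℝ) = t := real_inner_comm a₁ a₂
    rw [hcomm]
    ring
  have h1 : ‖a₁ - a₂‖ ^ 2 = x ^ 2 + y ^ 2 - 2 * t := by
    rw [@norm_sub_sq_real]; ring
  have hsign : 0 ≤ (x ^ m - y ^ m) * (x ^ 2 - y ^ 2) := by
    rcases le_total x y with h | h
    · have h1 := pow_le_pow_left₀ hx h m
      have h2 := pow_le_pow_left₀ hx h 2
      nlinarith
    · have h1 := pow_le_pow_left₀ hy h m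
      have h2 := pow_le_pow_left₀ hy h 2
      nlinarith
  have key : (x ^ m + y ^ m) * ‖a₁ - a₂‖ ^ 2 ≤
      2 * (inner ℝ ((x ^ m) • a₁ - (y ^ m) • a₂) (a₁ - a₂) : ℝ) := by
    rw [hinner, h1]; nlinarith
  rcases Nat.eq_zero_or_pos m with rfl | hm
  · simp only [pow_zero, one_smul, pow_zero, one_mul]
    rw [real_inner_self_eq_norm_sq]
  · have hd : (0:ℝ) ≤ ‖a₁ - a₂‖ := norm_nonneg _
    have hdm : ‖a₁ - a₂‖ ^ m ≤ 2 ^ (m - 1) * (x ^ m + y ^ m) := by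
      calc ‖a₁ - a₂‖ ^ m ≤ (x + y) ^ m :=
            pow_le_pow_left₀ hd (norm_sub_le _ _) m
        _ ≤ 2 ^ (m - 1) * (x ^ m + y ^ m) := add_pow_le hx hy m
    have step : ‖a₁ - a₂‖ ^ (m + 2) ≤ 2 ^ (m - 1) * ((x ^ m + y ^ m) * ‖a₁ - a₂‖ ^ 2) := by
      have := mul_le_mul_of_nonneg_right hdm (sq_nonneg ‖a₁ - a₂‖)
      calc ‖a₁ - a₂‖ ^ (m + 2) = ‖a₁ - a₂‖ ^ m * ‖a₁ - a₂‖ ^ 2 := by ring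
        _ ≤ 2 ^ (m - 1) * (x ^ m + y ^ m) * ‖a₁ - a₂‖ ^ 2 := this
        _ = 2 ^ (m - 1) * ((x ^ m + y ^ m) * ‖a₁ - a₂‖ ^ 2) := by ring
    have step2 := mul_le_mul_of_nonneg_left key (by positivity : (0:ℝ) ≤ 2 ^ (m - 1))
    have h2m : (2:ℝ) ^ (m - 1) * 2 = 2 ^ m := by
      rw [← pow_succ]
      congr 1
      omega
    calc ‖a₁ - a₂‖ ^ (m + 2) ≤ 2 ^ (m - 1) * ((x ^ m + y ^ m) * ‖a₁ - a₂‖ ^ 2) := step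
      _ ≤ 2 ^ (m - 1) * (2 * (inner ℝ ((x ^ m) • a₁ - (y ^ m) • a₂) (a₁ - a₂) : ℝ)) := step2
      _ = 2 ^ m * (inner ℝ ((x ^ m) • a₁ - (y ^ m) • a₂) (a₁ - a₂) : ℝ) := by
          rw [← h2m]; ring
end
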